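/- Model a 1-in-3 formula as a list of clauses, where each clause is a list of literals and a literal is a pair (v, s) of a variable v : ℕ and a sign s : Bool (s = true meaning the literal is negated); an assignment τ : ℕ → Bool satisfies the literal (v, s) if τ v ≠ s, and τ 1-in-3-satisfies the formula if in every clause exactly one literal is satisfied. Let φ be a formula, let C = [(x, true), ℓ₂, ℓ₃] be a clause containing the negated literal ¬x, and let x′ be a variable that occurs neither in φ nor in C and is distinct from x and from the variables of ℓ₂, ℓ₃. Then the formula φ together with the clause C is 1-in-3-satisfiable if and only if the formula φ together with the two clauses [(x′, false), ℓ₂, ℓ₃] and [(x′, false), (x, false)] is 1-in-3-satisfiable. -/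

import Mathlib

/-- A literal is a variable together with a sign (`true` meaning negated). -/
abbrev Literal : Type := ℕ × Bool

/-- An assignment satisfies the literal `(v, s)` if `τ v ≠ s`. -/
def SatLit (τ : ℕ → Bool) (l : Literal) : Bool := τ l.1 != l.2

/-- An assignment 1-in-3 satisfies a clause if exactly one literal is satisfied. -/
def SatClause (τ : ℕ → Bool) (c : List Literal) : Prop := c.countP (SatLit τ) = 1

/-- An assignment 1-in-3 satisfies a formula if it 1-in-3 satisfies every clause. -/
def SatFormula (τ : ℕ → Bool) (φ : List (List Literal)) : Prop :=
  ∀ c ∈ φ, SatClause τ c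

lemma satLit_update_ne (τ : ℕ → Bool) (x' : ℕ) (b : Bool) (l : Literal)
    (h : l.1 ≠ x') : SatLit (Function.update τ x' b) l = SatLit τ l := by
  simp [SatLit, Function.update_of_ne h]

lemma satClause_congr (τ τ' : ℕ → Bool) (c : List Literal)
    (h : ∀ l ∈ c, SatLit τ l = SatLit τ' l) : SatClause τ c ↔ SatClause τ' c := by
  have e : c.countP (SatLit τ) = c.countP (SatLit τ') :=
    List.countP_congr (fun l hl => by rw [h l hl])
  unfold SatClause
  rw [e]

/-- Formula-level correctness of the reduction of Theorem 6: a clause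
`(¬x, ℓ₂, ℓ₃)` may be replaced by the two clauses `(x', ℓ₂, ℓ₃)` and `(x', x)`
with a fresh variable `x'`, preserving 1-in-3 satisfiability. -/
theorem replace_negated_clause (φ : List (List Literal)) (x x' : ℕ)
    (ℓ₂ ℓ₃ : Literal)
    (hfreshφ : ∀ c ∈ φ, ∀ l ∈ c, l.1 ≠ x')
    (hx : x ≠ x') (h₂ : ℓ₂.1 ≠ x') (h₃ : ℓ₃.1 ≠ x') :
    (∃ τ : ℕ → Bool, SatFormula τ ([(x, true), ℓ₂, ℓ₃] :: φ)) ↔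
    (∃ τ : ℕ → Bool,
      SatFormula τ ([(x', false), ℓ₂, ℓ₃] :: [(x', false), (x, false)] :: φ)) := by
  constructor
  · rintro ⟨τ, hτ⟩
    refine ⟨Function.update τ x' (!τ x), ?_⟩
    intro c hc
    rcases List.mem_cons.mp hc with rfl | hc
    swap
    rcases List.mem_cons.mp hc with rfl | hc
    rotate_right
    · have := hτ _ (List.mem_cons_self)
      unfold SatClause at this ⊢
      simp only [List.countP_cons, List.countP_nil] at this ⊢
      rw [satLit_update_ne _ _ _ _ h₂, satLit_update_ne _ _ _ _ h₃]
      have h1 : SatLit (Function.update τ x' (!τ x)) (x', false) = SatLit τ (x, true) := by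
        simp [SatLit, Function.update_self]
      rw [h1]; omega
    · unfold SatClause
      rw [List.countP_cons, List.countP_cons]
      simp only [List.countP_nil]
      have h1 : SatLit (Function.update τ x' (!τ x)) (x', false) = !τ x := by
        simp [SatLit, Function.update_self]
      have h2 : SatLit (Function.update τ x' (!τ x)) (x, false) = τ x := by
        simp [SatLit, Function.update_of_ne hx]
      rw [h1, h2]; cases τ x <;> simp
    · have := hτ _ (List.mem_cons_of_mem _ hc)
      rw [satClause_congr]
      · exact this
      · intro l hl
        exact satLit_update_ne _ _ _ _ (hfreshφ _ hc _ hl)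
  · rintro ⟨τ, hτ⟩
    refine ⟨τ, ?_⟩
    have hC2 := hτ _ (List.mem_cons_of_mem _ (List.mem_cons_self))
    have hC1 := hτ _ (List.mem_cons_self)
    have hxx : SatLit τ (x', false) = SatLit τ (x, true) := by
      unfold SatClause at hC2
      simp only [List.countP_cons, List.countP_nil] at hC2
      simp only [SatLit] at hC2 ⊢
      cases h : τ x' <;> cases h' : τ x <;> simp_all
    intro c hc
    rcases List.mem_cons.mp hc with rfl | hc
    · unfold SatClause at hC1 ⊢
      simp only [List.countP_cons, List.countP_nil] at hC1 ⊢
      rw [← hxx]; exact hC1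
    · exact hτ _ (List.mem_cons_of_mem _ (List.mem_cons_of_mem _ hc))
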